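/- arXiv:1807.00352 — 3 statements merged into one kernel-verified Lean document; each statement's English description precedes it below -/
import Mathlib

section
/- Let R ≥ 2 be an integer, ρ = 1/R, L ≥ 2R, and define h(x) = (ρ²/2)(L-1-x)(L-x) + 1 - (1-ρ)^{x-L+R+1} for real x. Then h is strictly increasing on the interval [L-R+1, L-1]. -/
open Real

/-- Auxiliary: derivative of `y ↦ (1-y) * exp (y + y^2/2)`. -/
lemma aux_hasDeriv (y : ℝ) :
    HasDerivAt (fun y : ℝ => (1 - y) * Real.exp (y + y ^ 2 / 2))
      ((-1) * Real.exp (y + y ^ 2 / 2) +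
        (1 - y) * ((1 + y) * Real.exp (y + y ^ 2 / 2))) y := by
  have h1 : HasDerivAt (fun y : ℝ => y + y ^ 2 / 2) (1 + y) y := by
    have hid : HasDerivAt (fun y : ℝ => y) 1 y := hasDerivAt_id y
    have hsq : HasDerivAt (fun y : ℝ => y ^ 2 / 2) y y := by
      have := ((hasDerivAt_pow 2 y).div_const 2)
      simpa using this
    exact hid.add hsq
  have h2 : HasDerivAt (fun y : ℝ => Real.exp (y + y ^ 2 / 2))
      ((1 + y) * Real.exp (y + y ^ 2 / 2)) y := by
    have := h1.exp
    simpa [mul_comm] using this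
  have h3 : HasDerivAt (fun y : ℝ => 1 - y) (-1) y := by
    exact (hasDerivAt_id' y).const_sub 1
  exact h3.mul h2

/-- `log (1 - x) ≤ -x - x^2/2` for `0 ≤ x < 1`. -/
lemma log_one_sub_le_quad {x : ℝ} (h0 : 0 ≤ x) (h1 : x < 1) :
    Real.log (1 - x) ≤ -x - x ^ 2 / 2 := by
  set φ : ℝ → ℝ := fun y => (1 - y) * Real.exp (y + y ^ 2 / 2) with hφ
  have hanti : AntitoneOn φ (Set.Ici (0:ℝ)) := by
    apply antitoneOn_of_deriv_nonpos (convex_Ici 0)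
    · exact fun y _ => ((aux_hasDeriv y).continuousAt).continuousWithinAt
    · exact fun y _ => ((aux_hasDeriv y).differentiableAt).differentiableWithinAt
    · intro y hy
      rw [interior_Ici] at hy
      rw [(aux_hasDeriv y).deriv]
      have hey := Real.exp_pos (y + y ^ 2 / 2)
      nlinarith [sq_nonneg y, hey.le, Set.mem_Ioi.mp hy]
  have hx1 : φ x ≤ φ 0 := hanti (Set.mem_Ici.mpr le_rfl) (Set.mem_Ici.mpr h0) h0
  have hφx : (1 - x) * Real.exp (x + x ^ 2 / 2) ≤ 1 := by
    have hφ0 : φ 0 = 1 := by simp [hφ]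
    simpa [hφ, hφ0] using hx1
  have hpos : 0 < 1 - x := by linarith
  rw [Real.log_le_iff_le_exp hpos]
  have he : -x - x ^ 2 / 2 = -(x + x ^ 2 / 2) := by ring
  rw [he, Real.exp_neg, inv_eq_one_div, le_div_iff₀ (Real.exp_pos _)]
  linarith [hφx]

/-- With `ρ = 1/R`, `h x = (ρ²/2)(L-1-x)(L-x) + 1 - (1-ρ)^(x-L+R+1)` (real power)
is strictly increasing on `[L-R+1, L-1]` when `R ≥ 2` and `L ≥ 2R`. -/
theorem stmt8 (R : ℕ) (hR : 2 ≤ R) (L : ℝ) (hL : 2 * (R : ℝ) ≤ L) :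
    StrictMonoOn
      (fun x : ℝ =>
        ((1 / (R : ℝ)) ^ 2 / 2) * (L - 1 - x) * (L - x) + 1 -
          (1 - 1 / (R : ℝ)) ^ (x - L + (R : ℝ) + 1))
      (Set.Icc (L - R + 1) (L - 1)) := by
  have hR2 : (2:ℝ) ≤ (R:ℝ) := by exact_mod_cast hR
  have hRpos : (0:ℝ) < (R:ℝ) := by linarith
  set ρ : ℝ := 1 / (R:ℝ) with hρdef
  have hρ : 0 < ρ := by positivity
  have hρhalf : ρ ≤ 1/2 := by
    rw [hρdef]
    rw [div_le_div_iff₀ hRpos (by norm_num)]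
    linarith
  have hρR : ρ * (R:ℝ) = 1 := by
    rw [hρdef]; field_simp
  set a : ℝ := 1 - ρ with hadef
  have ha0 : 0 < a := by rw [hadef]; linarith
  have ha1 : a < 1 := by rw [hadef]; linarith
  -- rewrite rpow as exp
  have hfun : (fun x : ℝ =>
        (ρ ^ 2 / 2) * (L - 1 - x) * (L - x) + 1 -
          a ^ (x - L + (R : ℝ) + 1))
      = (fun x : ℝ =>
        (ρ ^ 2 / 2) * (L - 1 - x) * (L - x) + 1 -
          Real.exp (Real.log a * (x - L + (R : ℝ) + 1))) := by
    funext x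
    rw [Real.rpow_def_of_pos ha0]
  rw [hfun]
  -- derivative
  have hF : ∀ x : ℝ, HasDerivAt
      (fun x : ℝ =>
        (ρ ^ 2 / 2) * (L - 1 - x) * (L - x) + 1 -
          Real.exp (Real.log a * (x - L + (R : ℝ) + 1)))
      ((ρ ^ 2 / 2) * (2 * x - 2 * L + 1) -
        Real.exp (Real.log a * (x - L + (R : ℝ) + 1)) * Real.log a) x := by
    intro x
    have h1 : HasDerivAt (fun x : ℝ => L - 1 - x) (-1) x := by
      exact (hasDerivAt_id' x).const_sub (L - 1)
    have h2 : HasDerivAt (fun x : ℝ => L - x) (-1) x := by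
      exact (hasDerivAt_id' x).const_sub L
    have hpoly : HasDerivAt (fun x : ℝ => (ρ ^ 2 / 2) * (L - 1 - x) * (L - x))
        ((ρ ^ 2 / 2 * -1) * (L - x) + (ρ ^ 2 / 2 * (L - 1 - x)) * (-1)) x :=
      (h1.const_mul (ρ ^ 2 / 2)).mul h2
    have hlin : HasDerivAt (fun x : ℝ => Real.log a * (x - L + (R:ℝ) + 1))
        (Real.log a * 1) x := by
      exact ((((hasDerivAt_id x).sub_const L).add_const (R:ℝ)).add_const 1).const_mul _
    have hexp := hlin.exp
    have := (hpoly.add_const 1).sub hexp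
    exact this.congr_deriv (by ring)
  apply strictMonoOn_of_deriv_pos (convex_Icc _ _)
  · exact fun x _ => ((hF x).continuousAt).continuousWithinAt
  intro x hx
  rw [interior_Icc] at hx
  rw [(hF x).deriv]
  -- positivity of the derivative
  set t : ℝ := x - L + (R:ℝ) + 1 with ht
  have ht2 : 2 ≤ t := by
    have := hx.1
    rw [ht]; linarith
  have hEa : Real.exp (Real.log a * t) = a * a * Real.exp (Real.log a * (t - 2)) := by
    have h : Real.log a * t = Real.log a + (Real.log a + Real.log a * (t - 2)) := by ring
    rw [h, Real.exp_add, Real.exp_add, Real.exp_log ha0, mul_assoc]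
  have hlneg : Real.log a < 0 := Real.log_neg ha0 ha1
  have hbkey : ρ + ρ ^ 2 / 2 ≤ -Real.log a := by
    have h := log_one_sub_le_quad hρ.le (by linarith : ρ < 1)
    rw [← hadef] at h
    linarith
  have hba : (-Real.log a) * a ≤ ρ := by
    have h := Real.log_le_sub_one_of_pos (inv_pos.mpr ha0)
    rw [Real.log_inv] at h
    have hinv : a⁻¹ * a = 1 := inv_mul_cancel₀ (ne_of_gt ha0)
    have := mul_le_mul_of_nonneg_right h ha0.le
    nlinarith
  set E2 : ℝ := Real.exp (Real.log a * (t - 2)) with hE2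
  have hE2pos : 0 < E2 := Real.exp_pos _
  have hE2ge : 1 + Real.log a * (t - 2) ≤ E2 := by
    have := Real.add_one_le_exp (Real.log a * (t - 2))
    linarith
  set l : ℝ := Real.log a with hl
  rw [hEa]
  -- key product estimates
  clear_value E2 l t a ρ
  have hbaa : 0 ≤ a * a * (-l) := by nlinarith
  have h1 : a * a * (-l) * (1 + l * (t - 2)) ≤ a * a * (-l) * E2 :=
    mul_le_mul_of_nonneg_left hE2ge hbaa
  have hla : 0 ≤ -l * a := mul_nonneg (by linarith) ha0.le
  have h2 : (a * (-l)) ^ 2 ≤ ρ ^ 2 := by nlinarith [mul_self_le_mul_self hla hba]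
  have h4 : (a * (-l)) ^ 2 * (t - 2) ≤ ρ ^ 2 * (t - 2) :=
    mul_le_mul_of_nonneg_right h2 (by linarith)
  have h3 : (ρ + ρ ^ 2 / 2) * (a * a) ≤ (-l) * (a * a) := by
    have : 0 ≤ a * a := by positivity
    exact mul_le_mul_of_nonneg_right hbkey this
  have hxt : 2 * x - 2 * L + 1 = 2 * t - 2 * (R:ℝ) - 1 := by rw [ht]; ring
  rw [hxt]
  have hρ2R : ρ ^ 2 * (R:ℝ) = ρ := by
    have h5 : ρ ^ 2 * (R:ℝ) = ρ * (ρ * (R:ℝ)) := by ring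
    rw [h5, hρR, mul_one]
  have ha' : a = 1 - ρ := hadef
  have e1 : ρ ^ 2 / 2 * (2 * t - 2 * (R:ℝ) - 1) = ρ ^ 2 * t - ρ - ρ ^ 2 / 2 := by
    have h6 : ρ ^ 2 / 2 * (2 * t - 2 * (R:ℝ) - 1)
        = ρ ^ 2 * t - ρ ^ 2 * (R:ℝ) - ρ ^ 2 / 2 := by ring
    rw [h6, hρ2R]
  have hid : a * a * (-l) * (1 + l * (t - 2)) = (-l) * (a * a) - (a * (-l)) ^ 2 * (t - 2) := by
    ring
  have e2 : (ρ + ρ ^ 2 / 2) * (a * a) - ρ ^ 2 * (t - 2) ≤ -(a * a * E2 * l) := by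
    have h7 : a * a * (-l) * E2 = -(a * a * E2 * l) := by ring
    calc (ρ + ρ ^ 2 / 2) * (a * a) - ρ ^ 2 * (t - 2)
        ≤ -l * (a * a) - (a * -l) ^ 2 * (t - 2) := by linarith [h3, h4]
      _ = a * a * -l * (1 + l * (t - 2)) := hid.symm
      _ ≤ a * a * -l * E2 := h1
      _ = -(a * a * E2 * l) := h7
  have e3 : (ρ + ρ ^ 2 / 2) * (a * a) = ρ - 3/2 * ρ ^ 2 + ρ ^ 4 / 2 := by rw [ha']; ring
  have e4 : ρ ^ 2 * (t - 2) = ρ ^ 2 * t - 2 * ρ ^ 2 := by ring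
  have e5 : (0:ℝ) < ρ ^ 4 := by positivity
  linarith [e1, e2, e3, e4, e5]
end

section
/- Let R ≥ 2 be an integer, ρ = 1/R, and L ≥ 2R. Define p(x) = 1 - 2(1-ρ)^{x-L+1+R} + 2Lρ - 2xρ - 2ρ. Then p(x) > 0 for all x in [L-R, L-1]. In particular, the average queue-length cost a_n = n+1-R+2R(1-ρ)^{n-L+R+1} + ρ(L-1-n)(n-L) is strictly increasing for integer n in [L-R, L-1]. -/
/-- With `ρ = 1/R`, `p x = 1 - 2(1-ρ)^(x-L+1+R) + 2Lρ - 2xρ - 2ρ` is positive on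
`[L-R, L-1]`; consequently the average cost
`a n = n+1-R+2R(1-ρ)^(n-L+R+1) + ρ(L-1-n)(n-L)` is strictly increasing for
integer `n ∈ [L-R, L-1]`. -/
theorem stmt9 (R L : ℤ) (hR : 2 ≤ R) (hL : 2 * R ≤ L) :
    (∀ x : ℝ, (L : ℝ) - R ≤ x → x ≤ (L : ℝ) - 1 →
      0 < 1 - 2 * (1 - 1 / (R : ℝ)) ^ (x - L + 1 + (R : ℝ)) + 2 * L * (1 / (R : ℝ)) -
        2 * x * (1 / (R : ℝ)) - 2 * (1 / (R : ℝ))) ∧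
    StrictMonoOn
      (fun n : ℤ =>
        (n : ℝ) + 1 - R + 2 * R * (1 - 1 / (R : ℝ)) ^ ((n : ℝ) - L + R + 1) +
          (1 / (R : ℝ)) * ((L : ℝ) - 1 - n) * ((n : ℝ) - L))
      (Set.Icc (L - R) (L - 1)) := by
  have hR2 : (2:ℝ) ≤ (R:ℝ) := by exact_mod_cast hR
  have hRpos : (0:ℝ) < R := by linarith
  have hRne : (R:ℝ) ≠ 0 := ne_of_gt hRpos
  have hc0 : 0 < 1 - 1 / (R:ℝ) := by
    have : 1 / (R:ℝ) ≤ 1/2 := by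
      rw [div_le_div_iff₀ hRpos (by norm_num)]; linarith
    linarith
  set c : ℝ := 1 - 1 / (R:ℝ) with hc
  clear_value c
  -- c^R < 1/2
  have hcR : c ^ (R:ℝ) < 1/2 := by
    have h1 : c ≤ Real.exp (-(1/(R:ℝ))) := by
      have := Real.add_one_le_exp (-(1/(R:ℝ)))
      simp only [hc]; linarith
    have h2 : c ^ (R:ℝ) ≤ (Real.exp (-(1/(R:ℝ)))) ^ (R:ℝ) :=
      Real.rpow_le_rpow hc0.le h1 (by linarith)
    have h3 : (Real.exp (-(1/(R:ℝ)))) ^ (R:ℝ) = Real.exp (-1) := by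
      rw [← Real.exp_mul]
      congr 1
      field_simp
    have h4 : Real.exp (-1) < 1/2 := by
      rw [Real.exp_neg, inv_lt_comm₀ (Real.exp_pos 1) (by norm_num)]
      have := Real.exp_one_gt_d9
      norm_num at this ⊢
      linarith
    calc c ^ (R:ℝ) ≤ _ := h2
      _ = _ := h3
      _ < 1/2 := h4
  have hCnn : 0 ≤ c ^ (R:ℝ) := Real.rpow_nonneg hc0.le _
  -- positivity of p
  have hp : ∀ x : ℝ, (L : ℝ) - R ≤ x → x ≤ (L : ℝ) - 1 →
      0 < 1 - 2 * c ^ (x - L + 1 + (R : ℝ)) + 2 * L * (1 / (R : ℝ)) -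
        2 * x * (1 / (R : ℝ)) - 2 * (1 / (R : ℝ)) := by
    intro x hx1 hx2
    have ht1 : 1 ≤ x - (L:ℝ) + 1 + R := by linarith
    have htR : x - (L:ℝ) + 1 + R ≤ R := by linarith
    set t : ℝ := x - L + 1 + R with ht
    set l : ℝ := (t - 1) / (R - 1) with hl
    have hR1 : (0:ℝ) < R - 1 := by linarith
    have hl0 : 0 ≤ l := div_nonneg (by linarith) hR1.le
    have hl1 : l ≤ 1 := by rw [hl, div_le_one hR1]; linarith
    have hlt : t = (1 - l) + l * R := by
      have : l * (R - 1) = t - 1 := by rw [hl, div_mul_cancel₀ _ hR1.ne']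
      linear_combination -this
    have hsplit : c ^ t = c ^ (1 - l) * (c ^ (R:ℝ)) ^ l := by
      rw [hlt, Real.rpow_add hc0, mul_comm l (R:ℝ), Real.rpow_mul hc0.le]
    have hB : c ^ t ≤ (1 - l) * c + l * (c ^ (R:ℝ)) := by
      rw [hsplit]
      exact Real.geom_mean_le_arith_mean2_weighted (by linarith) hl0 hc0.le hCnn (by ring)
    have hlc : l * c ^ (R:ℝ) ≤ c ^ (R:ℝ) := mul_le_of_le_one_left hCnn hl1
    have e1 : 2 * (L:ℝ) * (1/(R:ℝ)) - 2 * x * (1/(R:ℝ)) - 2 * (1/(R:ℝ)) = 2 * ((1 - l) * c) := by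
      have e3 : (R:ℝ) - t = (R - 1) * (1 - l) := by rw [hlt]; ring
      have hx : x = t + L - 1 - R := by rw [ht]; ring
      rw [hx, hc]
      field_simp
      nlinarith [e3]
    linarith [hB, hlc, hcR, e1]
  refine ⟨hp, ?_⟩
  -- step lemma
  have hstep : ∀ k : ℤ, L - R ≤ k → k ≤ L - 1 →
      ((k:ℝ) + 1 - R + 2 * R * c ^ ((k:ℝ) - L + R + 1) +
          (1 / (R : ℝ)) * ((L : ℝ) - 1 - k) * ((k : ℝ) - L)) <
      (((k+1:ℤ):ℝ) + 1 - R + 2 * R * c ^ (((k+1:ℤ):ℝ) - L + R + 1) +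
          (1 / (R : ℝ)) * ((L : ℝ) - 1 - ((k+1:ℤ):ℝ)) * (((k+1:ℤ):ℝ) - L)) := by
    intro k hk1 hk2
    have hk1' : (L:ℝ) - R ≤ (k:ℝ) := by exact_mod_cast (by exact_mod_cast hk1 : ((L - R : ℤ):ℝ) ≤ (k:ℝ))
    have hk2' : (k:ℝ) ≤ (L:ℝ) - 1 := by exact_mod_cast (by exact_mod_cast hk2 : ((k:ℤ):ℝ) ≤ ((L-1:ℤ):ℝ))
    have hpk := hp k hk1' hk2'
    have hexp : c ^ (((k+1:ℤ):ℝ) - L + R + 1) = c ^ ((k:ℝ) - L + R + 1) * c := by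
      push_cast
      rw [show ((k:ℝ) + 1) - L + R + 1 = ((k:ℝ) - L + R + 1) + 1 by ring,
        Real.rpow_add hc0, Real.rpow_one]
    rw [hexp]
    push_cast
    have hA : c ^ ((k:ℝ) - L + R + 1) = c ^ ((k:ℝ) - L + 1 + R) := by ring_nf
    rw [hA] at *
    set A := c ^ ((k:ℝ) - L + 1 + R) with hAdef
    have hAc : 2 * (R:ℝ) * (A * c) = 2 * R * A - 2 * A := by
      rw [hc]; field_simp
    linarith [hpk, hAc]
  -- strict mono via induction
  intro m hm n hn hmn
  simp only [Set.mem_Icc] at hm hn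
  have key : ∀ n : ℤ, m + 1 ≤ n → n ≤ L - 1 →
      ((m:ℝ) + 1 - R + 2 * R * c ^ ((m:ℝ) - L + R + 1) +
          (1 / (R : ℝ)) * ((L : ℝ) - 1 - m) * ((m : ℝ) - L)) <
      ((n:ℝ) + 1 - R + 2 * R * c ^ ((n:ℝ) - L + R + 1) +
          (1 / (R : ℝ)) * ((L : ℝ) - 1 - n) * ((n : ℝ) - L)) := by
    intro n hn1
    refine Int.le_induction (motive := fun N _ => N ≤ L - 1 →
      ((m:ℝ) + 1 - R + 2 * R * c ^ ((m:ℝ) - L + R + 1) +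
          (1 / (R : ℝ)) * ((L : ℝ) - 1 - m) * ((m : ℝ) - L)) <
      ((N:ℝ) + 1 - R + 2 * R * c ^ ((N:ℝ) - L + R + 1) +
          (1 / (R : ℝ)) * ((L : ℝ) - 1 - N) * ((N : ℝ) - L))) ?_ ?_ n hn1
    · intro _; exact hstep m hm.1 hm.2
    · intro k hk ih hk2
      exact lt_trans (ih (by omega)) (hstep k (by omega) (by omega))
  exact key n (by omega) hn.2
end

section
/- Let R ≥ 2, ρ = 1/R, and L ≥ 2R. Define p(x) = (x - R)(R-1) - 2R(L-1)·((ρ²/2)(L-1-x)(L-x) + 1 - (1-ρ)^{x-L+R+1} - 1/2 - 1/(2R)). Then p(x) ≥ 0 for all x in [L-R+1, L-1]. -/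
private lemma cubic_exp_bound {v : ℝ} (h0 : 0 ≤ v) (h1 : v ≤ 1) :
    1 - v + v ^ 2 / 2 - v ^ 3 / 6 - 5 * v ^ 4 / 96 ≤ Real.exp (-v) := by
  have habs : |(-v)| ≤ 1 := by rw [abs_neg, abs_of_nonneg h0]; exact h1
  have hb := Real.exp_bound habs (n := 4) (by norm_num)
  have hsum : ∑ m ∈ Finset.range 4, (-v) ^ m / (m.factorial : ℝ)
      = 1 - v + v ^ 2 / 2 - v ^ 3 / 6 := by
    simp [Finset.sum_range_succ, Nat.factorial]
    ring
  rw [hsum] at hb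
  have habs4 : |(-v)| ^ 4 * ((4:ℕ).succ / ((4:ℕ).factorial * (4:ℕ)) : ℝ) = 5 * v ^ 4 / 96 := by
    rw [abs_neg, abs_of_nonneg h0]
    norm_num [Nat.factorial]
    ring
  rw [habs4] at hb
  have := (abs_le.mp hb).1
  linarith

private lemma coefM_nonneg {r s : ℝ} (hr : 2 ≤ r) (hs0 : 0 ≤ s) (hs : s ≤ r - 2) :
    0 ≤ -96 * (r-1)^2 * (r-2-s) * (r-1-s)
      + 2 * (96*(r-1)^4 - 96*s*(r-1)^3 + 48*s^2*(r-1)^2 - 16*s^3*(r-1) - 5*s^4) := by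
  nlinarith [mul_nonneg (mul_nonneg (sq_nonneg (r-1)) (show (0:ℝ) ≤ r-1-s by linarith))
      (show (0:ℝ) ≤ r+s by linarith),
    mul_nonneg (mul_nonneg (sq_nonneg s) (show (0:ℝ) ≤ r-1 by linarith))
      (show (0:ℝ) ≤ r-1-s by linarith),
    mul_nonneg (mul_nonneg (sq_nonneg s) (show (0:ℝ) ≤ r-1-s by linarith))
      (show (0:ℝ) ≤ r-1+s by linarith),
    mul_nonneg (sq_nonneg s) (sq_nonneg (r-1))]

private lemma base_nonneg {r s : ℝ} (hr : 2 ≤ r) (hs0 : 0 ≤ s) (hs : s ≤ r - 2) :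
    0 ≤ 48*r*(r-1)^3 + 48*(r-1)^2*(r^2-3*r+1)*s - 16*(2*r-1)*(r-1)*s^3 - 5*(2*r-1)*s^4 := by
  have h3 : 0 ≤ 16*(2*r-1)*(r-1) * (s^2 * (r-2-s)) := by
    apply mul_nonneg (by nlinarith) (mul_nonneg (sq_nonneg s) (by linarith))
  have h4 : 0 ≤ 5*(2*r-1) * (s^2 * ((r-2-s)*(r-2+s))) := by
    apply mul_nonneg (by nlinarith)
      (mul_nonneg (sq_nonneg s) (mul_nonneg (by linarith) (by linarith)))
  -- q(s) = q0 + q1 s - C s^2 with C = 16(2r-1)(r-1)(r-2) + 5(2r-1)(r-2)^2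
  rcases le_or_gt 0 (48*(r-1)^2*(r^2-3*r+1)
      - (16*(2*r-1)*(r-1)*(r-2) + 5*(2*r-1)*(r-2)^2)*(r-2)) with hcase | hcase
  · have h5 : 0 ≤ (16*(2*r-1)*(r-1)*(r-2) + 5*(2*r-1)*(r-2)^2) * (s * (r-2-s)) := by
      apply mul_nonneg (by nlinarith) (mul_nonneg hs0 (by linarith))
    nlinarith [mul_nonneg hs0 hcase]
  · -- q1 - C m < 0 : use s ≤ m and Q(r) ≥ 0
    have h5 : 0 ≤ (16*(2*r-1)*(r-1)*(r-2) + 5*(2*r-1)*(r-2)^2) * (s * (r-2-s)) := by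
      apply mul_nonneg (by nlinarith) (mul_nonneg hs0 (by linarith))
    have hQ : 0 ≤ 96 + 288*(r-2) + 336*(r-2)^2 + 241*(r-2)^3 + 150*(r-2)^4 + 48*(r-2)^5 := by
      have h := sub_nonneg.mpr hr
      positivity
    have hneg : s - (r-2) ≤ 0 := by linarith
    have h6 := mul_nonneg (neg_nonneg.mpr hcase.le) (neg_nonneg.mpr hneg)
    nlinarith [h6, hQ, h3, h4, h5]

set_option maxHeartbeats 1000000 in
/-- With `ρ = 1/R`, the numerator
`p x = (x-R)(R-1) - 2R(L-1)·((ρ²/2)(L-1-x)(L-x) + 1 - (1-ρ)^(x-L+R+1) - 1/2 - 1/(2R))`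
is nonnegative on `[L-R+1, L-1]` when `R ≥ 2` and `L ≥ 2R`. -/
theorem stmt13 (R : ℕ) (hR : 2 ≤ R) (L : ℝ) (hL : 2 * (R : ℝ) ≤ L) :
    ∀ x : ℝ, L - R + 1 ≤ x → x ≤ L - 1 →
      0 ≤ (x - R) * ((R : ℝ) - 1) -
        2 * R * (L - 1) *
          (((1 / (R : ℝ)) ^ 2 / 2) * (L - 1 - x) * (L - x) + 1 -
            (1 - 1 / (R : ℝ)) ^ (x - L + (R : ℝ) + 1) - 1 / 2 - 1 / (2 * R)) := by
  intro x hx1 hx2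
  obtain ⟨r, hrdef⟩ : ∃ r : ℝ, (R:ℝ) = r := ⟨_, rfl⟩
  rw [hrdef] at hL ⊢
  have hr2 : (2:ℝ) ≤ r := by rw [← hrdef]; exact_mod_cast hR
  have hr0 : (0:ℝ) < r := by linarith
  have hr1 : (1:ℝ) < r := by linarith
  have hc : (0:ℝ) < 1 - 1/r := by
    have : 1/r ≤ 1/2 := by
      apply div_le_div_of_nonneg_left (by norm_num) (by norm_num) hr2
    linarith
  obtain ⟨s, hsdef⟩ : ∃ s : ℝ, s = x - L + r - 1 := ⟨_, rfl⟩
  have hs0 : 0 ≤ s := by rw [hsdef]; linarith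
  have hs1 : s ≤ r - 2 := by rw [hsdef]; linarith
  obtain ⟨v, hvdef⟩ : ∃ v : ℝ, v = s / (r-1) := ⟨_, rfl⟩
  have hv0 : 0 ≤ v := by rw [hvdef]; exact div_nonneg hs0 (by linarith)
  have hv1 : v ≤ 1 := by
    rw [hvdef, div_le_one (by linarith)]; linarith
  have hr1' : r - 1 ≠ 0 := by linarith
  have hveq : v * (r - 1) = s := by
    rw [hvdef]; exact div_mul_cancel₀ s hr1'
  -- log bound
  have hlog : -(1/(r-1)) ≤ Real.log (1 - 1/r) := by
    have hpos : (0:ℝ) < r/(r-1) := div_pos hr0 (by linarith)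
    have h1 := Real.log_le_sub_one_of_pos hpos
    have h2 : Real.log (1 - 1/r) = - Real.log (r/(r-1)) := by
      rw [← Real.log_inv]
      congr 1
      field_simp
    have h3 : r/(r-1) - 1 = 1/(r-1) := by field_simp; ring
    rw [h2]; linarith [h1.trans_eq h3]
  -- exponential lower bound on (1-1/r)^(t-2)
  have hpow : Real.exp (-v) ≤ (1 - 1/r) ^ (s : ℝ) := by
    rw [Real.rpow_def_of_pos hc]
    apply Real.exp_le_exp.mpr
    have hv' : -v = -(1/(r-1)) * s := by rw [hvdef]; ring
    rw [hv']
    exact mul_le_mul_of_nonneg_right hlog hs0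
  have hcub := cubic_exp_bound hv0 hv1
  have hsplit : (1 - 1/r) ^ (x - L + r + 1 : ℝ) = (1 - 1/r)^2 * (1 - 1/r) ^ (s : ℝ) := by
    have he : x - L + r + 1 = (2:ℝ) + s := by rw [hsdef]; ring
    rw [he, Real.rpow_add hc, Real.rpow_two]
  have hK : (1-1/r)^2 * (1 - v + v^2/2 - v^3/6 - 5*v^4/96) ≤ (1 - 1/r) ^ (x - L + r + 1 : ℝ) := by
    rw [hsplit]
    exact mul_le_mul_of_nonneg_left (hcub.trans hpow) (by positivity)
  have hM : 2*r - 1 ≤ L - 1 := by linarith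
  have h2rM : (0:ℝ) ≤ 2*r*(L-1) := by nlinarith
  have hmain : 0 ≤ 96*r*(r-1)^3*(s+2-2*r) - 96*(r-1)^2*(L-1)*(r-2-s)*(r-1-s)
      + 2*(L-1)*(96*(r-1)^4 - 96*s*(r-1)^3 + 48*s^2*(r-1)^2 - 16*s^3*(r-1) - 5*s^4) := by
    have h1 := coefM_nonneg hr2 hs0 hs1
    have h2 := base_nonneg hr2 hs0 hs1
    linarith [mul_nonneg (sub_nonneg.2 hM) h1, h2]
  have hiden : ((x - r) * (r - 1) -
        2*r*(L-1) * (((1/r)^2/2)*(L-1-x)*(L-x) + 1 -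
          ((1-1/r)^2 * (1 - v + v^2/2 - v^3/6 - 5*v^4/96)) - 1/2 - 1/(2*r))) * (96*r*(r-1)^2)
      = 96*r*(r-1)^3*(s+2-2*r) - 96*(r-1)^2*(L-1)*(r-2-s)*(r-1-s)
      + 2*(L-1)*(96*(r-1)^4 - 96*s*(r-1)^3 + 48*s^2*(r-1)^2 - 16*s^3*(r-1) - 5*s^4) := by
    subst hvdef hsdef
    have h1 : r ≠ 0 := ne_of_gt hr0
    field_simp
    ring
  have hstep : 0 ≤ (x - r) * (r - 1) -
        2*r*(L-1) * (((1/r)^2/2)*(L-1-x)*(L-x) + 1 -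
          ((1-1/r)^2 * (1 - v + v^2/2 - v^3/6 - 5*v^4/96)) - 1/2 - 1/(2*r)) := by
    have hpos96 : (0:ℝ) < 96*r*(r-1)^2 := by positivity
    have := hmain
    rw [← hiden] at this
    exact (mul_nonneg_iff_of_pos_right hpos96).mp this
  linarith [mul_le_mul_of_nonneg_left hK h2rM]
end
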